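/- Let h ≥ r be positive integers and 0 < β < 1 a real. Then there exists α > 0 depending only on h, r, β such that for every graph G on n vertices, with p = p_r(G), for all 0 ≤ i ≤ h, 1 ≤ j ≤ h, and 1 ≤ ℓ ≤ j: ∑_{S ∈ B_{i,j}} |N(S)|^ℓ ≤ β n^{j+ℓ} p^{jℓ}, where B_{i,j} is the set of length-j vertex sequences that are not i-good relative to (α, β, h, r). -/

import Mathlib

/-- The common neighborhood of a sequence of vertices. -/
def commNbhd {V : Type} (G : SimpleGraph V) {j : ℕ} (S : Fin j → V) : Set V :=
  {v | ∀ a : Fin j, G.Adj (S a) v}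

/-- The `r`-norm density `p_r(G) := ((∑_v d(v)^r)/n^{r+1})^{1/r}`. -/
noncomputable def rnormDensity {V : Type} [Fintype V] (G : SimpleGraph V)
    [DecidableRel G.Adj] (r : ℕ) : ℝ :=
  ((∑ v : V, (G.degree v : ℝ) ^ r) / (Fintype.card V : ℝ) ^ (r + 1)) ^ ((r : ℝ)⁻¹)

/-- `IsGood G α β p h i j S` : the length-`j` vertex sequence `S` is `i`-good relative
to `(α, β, h, r)` in `G`, where `p = p_r(G)`. A sequence `T` is `0`-good if
`|N(T)| ≥ α p^{|T|} n`; for `i ≥ 1`, `S` is `i`-good if it is `0`-good and for every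
`|S| ≤ k ≤ h`, at least `(1-β)|N(S)|^k` of the length-`k` sequences in `N(S)` are
`(i-1)`-good. -/
def IsGood {V : Type} [Fintype V] (G : SimpleGraph V) (α β p : ℝ) (h : ℕ) :
    ℕ → (j : ℕ) → (Fin j → V) → Prop
  | 0, j, S => α * p ^ j * (Fintype.card V : ℝ) ≤ (Nat.card (commNbhd G S) : ℝ)
  | i + 1, j, S =>
      (α * p ^ j * (Fintype.card V : ℝ) ≤ (Nat.card (commNbhd G S) : ℝ)) ∧
      ∀ k : ℕ, j ≤ k → k ≤ h →
        (1 - β) * (Nat.card (commNbhd G S) : ℝ) ^ k ≤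
          (Nat.card {T : Fin k → V // (∀ a, T a ∈ commNbhd G S) ∧ IsGood G α β p h i k T} : ℝ)

section SumBadHelpers

open Finset

set_option linter.unusedSectionVars false

variable {V : Type} [Fintype V] (G : SimpleGraph V)

open Classical in
lemma card_seqIn (k : ℕ) (s : Set V) :
    Nat.card {T : Fin k → V // ∀ a, T a ∈ s} = Nat.card s ^ k := by
  rw [Nat.card_congr (Equiv.subtypePiEquivPi (p := fun _ b => b ∈ s)), Nat.card_fun,
    Nat.card_eq_fintype_card (α := Fin k), Fintype.card_fin]

open Classical in
lemma card_split {k : ℕ} (P Q : (Fin k → V) → Prop) :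
    Nat.card {T : Fin k → V // P T ∧ Q T} + Nat.card {T : Fin k → V // P T ∧ ¬ Q T}
      = Nat.card {T : Fin k → V // P T} := by
  simp only [Nat.card_eq_fintype_card, Fintype.card_subtype, ← Finset.filter_filter]
  exact Finset.card_filter_add_card_filter_not (fun T => Q T)

lemma comm_symm {j k : ℕ} (S : Fin j → V) (T : Fin k → V) :
    (∀ a, T a ∈ commNbhd G S) ↔ (∀ b, S b ∈ commNbhd G T) := by
  constructor <;> intro hyp b a <;> exact (hyp a b).symm

open Classical in
lemma card_as_sum {m : ℕ} (P : (Fin m → V) → Prop) [DecidablePred P] :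
    (Nat.card {T : Fin m → V // P T} : ℝ) = ∑ T : Fin m → V, (if P T then (1:ℝ) else 0) := by
  rw [Nat.card_eq_fintype_card, Fintype.card_subtype, Finset.card_filter]
  push_cast
  exact Finset.sum_congr rfl fun T _ => by split <;> norm_num

open Classical in
lemma double_count {j k : ℕ} (Bad : (Fin k → V) → Prop) :
    ∑ S : Fin j → V, (Nat.card {T : Fin k → V // (∀ a, T a ∈ commNbhd G S) ∧ Bad T} : ℝ)
      = ∑ T : Fin k → V, (if Bad T then ((Nat.card (commNbhd G T) : ℝ)) ^ j else 0) := by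
  calc ∑ S : Fin j → V, (Nat.card {T : Fin k → V // (∀ a, T a ∈ commNbhd G S) ∧ Bad T} : ℝ)
      = ∑ S : Fin j → V, ∑ T : Fin k → V,
          (if ((∀ a, T a ∈ commNbhd G S) ∧ Bad T) then (1:ℝ) else 0) :=
        Finset.sum_congr rfl fun S _ => card_as_sum _
    _ = ∑ T : Fin k → V, ∑ S : Fin j → V,
          (if ((∀ a, T a ∈ commNbhd G S) ∧ Bad T) then (1:ℝ) else 0) := Finset.sum_comm
    _ = ∑ T : Fin k → V, (if Bad T then ((Nat.card (commNbhd G T) : ℝ)) ^ j else 0) := by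
        refine Finset.sum_congr rfl fun T _ => ?_
        by_cases hB : Bad T
        · simp only [hB, and_true, if_true]
          have hcast : ((Nat.card (commNbhd G T) ^ j : ℕ) : ℝ)
              = ((Nat.card (commNbhd G T) : ℝ)) ^ j := by push_cast; rfl
          rw [← hcast, ← card_seqIn j (commNbhd G T),
            ← Nat.card_congr (Equiv.subtypeEquivRight fun S => comm_symm G S T), card_as_sum]
        · simp [hB]

lemma sum_rpow_le_card_mul {ι : Type*} [Fintype ι] (f : ι → ℝ) (hf : ∀ i, 0 ≤ f i)
    {θ : ℝ} (hθ0 : 0 < θ) (hθ1 : θ ≤ 1) :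
    ∑ i, f i ^ θ ≤ (Fintype.card ι : ℝ) ^ ((1:ℝ) - θ) * (∑ i, f i) ^ θ := by
  have hθ : θ ≠ 0 := ne_of_gt hθ0
  have hp : (1:ℝ) ≤ 1/θ := by rw [le_div_iff₀ hθ0]; linarith
  have h3 : ∀ i : ι, (f i ^ θ) ^ (1/θ) = f i := fun i => by
    rw [← Real.rpow_mul (hf i), mul_one_div_cancel hθ, Real.rpow_one]
  have h2 := Real.rpow_sum_le_const_mul_sum_rpow_of_nonneg (univ : Finset ι)
    (f := fun i => f i ^ θ) hp (fun i _ => Real.rpow_nonneg (hf i) θ)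
  simp only [h3, Finset.card_univ] at h2
  have hsum : 0 ≤ ∑ i, f i ^ θ := Finset.sum_nonneg fun i _ => Real.rpow_nonneg (hf i) θ
  have h4 : (∑ i, f i ^ θ) = ((∑ i, f i ^ θ) ^ (1/θ)) ^ θ := by
    rw [← Real.rpow_mul hsum, one_div_mul_cancel hθ, Real.rpow_one]
  rw [h4]
  calc ((∑ i, f i ^ θ) ^ (1/θ)) ^ θ
      ≤ ((Fintype.card ι : ℝ) ^ (1/θ - 1) * ∑ i, f i) ^ θ :=
        Real.rpow_le_rpow (Real.rpow_nonneg hsum _) h2 (le_of_lt hθ0)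
    _ = (Fintype.card ι : ℝ) ^ ((1:ℝ) - θ) * (∑ i, f i) ^ θ := by
        rw [Real.mul_rpow (Real.rpow_nonneg (Nat.cast_nonneg _) _)
          (Finset.sum_nonneg fun i _ => hf i), ← Real.rpow_mul (Nat.cast_nonneg _)]
        congr 2
        field_simp

lemma rnormDensity_nonneg [DecidableRel G.Adj] (r : ℕ) : 0 ≤ rnormDensity G r :=
  Real.rpow_nonneg (div_nonneg (Finset.sum_nonneg fun v _ => by positivity) (by positivity)) _

open Classical in
lemma bad0_sum {α p : ℝ} (hα0 : 0 < α) (hα1 : α ≤ 1) (hp : 0 ≤ p) {j ℓ : ℕ} (hℓ1 : 1 ≤ ℓ)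
    (cond : (Fin j → V) → Prop)
    (hcond : ∀ S, ¬ cond S →
      ((Nat.card (commNbhd G S) : ℝ) < α * p ^ j * (Fintype.card V : ℝ))) :
    ∑ S : Fin j → V, (if cond S then 0 else (Nat.card (commNbhd G S) : ℝ) ^ ℓ)
      ≤ α * ((Fintype.card V : ℝ) ^ (j + ℓ) * p ^ (j * ℓ)) := by
  set n : ℝ := (Fintype.card V : ℝ) with hndef
  have hn0 : (0:ℝ) ≤ n := Nat.cast_nonneg _
  have hterm : ∀ S : Fin j → V,
      (if cond S then 0 else (Nat.card (commNbhd G S) : ℝ) ^ ℓ) ≤ (α * p ^ j * n) ^ ℓ := by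
    intro S
    split
    · positivity
    · next hbad => exact pow_le_pow_left₀ (Nat.cast_nonneg _) (hcond S hbad).le ℓ
  calc ∑ S : Fin j → V, (if cond S then 0 else (Nat.card (commNbhd G S) : ℝ) ^ ℓ)
      ≤ ∑ _S : Fin j → V, (α * p ^ j * n) ^ ℓ := Finset.sum_le_sum fun S _ => hterm S
    _ = (Fintype.card (Fin j → V) : ℝ) * (α * p ^ j * n) ^ ℓ := by
        rw [Finset.sum_const, Finset.card_univ, nsmul_eq_mul]
    _ = n ^ j * (α ^ ℓ * ((p ^ j) ^ ℓ * n ^ ℓ)) := by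
        rw [Fintype.card_fun, Fintype.card_fin]
        push_cast
        ring
    _ ≤ n ^ j * (α * ((p ^ j) ^ ℓ * n ^ ℓ)) := by
        apply mul_le_mul_of_nonneg_left _ (by positivity)
        apply mul_le_mul_of_nonneg_right _ (by positivity)
        exact pow_le_of_le_one hα0.le hα1 (by omega)
    _ = α * (n ^ (j + ℓ) * p ^ (j * ℓ)) := by rw [pow_add, ← pow_mul]; ring

end SumBadHelpers

open scoped Classical in
/-- **Lemma 3.5.** For `h ≥ r ≥ 1` and `0 < β < 1` there is `α > 0` such that for
every graph `G` on `n` vertices, with `p = p_r(G)`, for all `0 ≤ i ≤ h`,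
`1 ≤ j ≤ h` and `1 ≤ ℓ ≤ j`, the sum of `|N(S)|^ℓ` over length-`j` sequences `S`
that are not `i`-good is at most `β n^{j+ℓ} p^{jℓ}`. -/
theorem sum_bad_pow_le (h r : ℕ) (hr : 1 ≤ r) (hrh : r ≤ h) (β : ℝ) (hβ0 : 0 < β)
    (hβ1 : β < 1) :
    ∃ α : ℝ, 0 < α ∧
      ∀ (V : Type) [Fintype V] [Nonempty V] (G : SimpleGraph V) [DecidableRel G.Adj],
        ∀ i j ℓ : ℕ, i ≤ h → 1 ≤ j → j ≤ h → 1 ≤ ℓ → ℓ ≤ j →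
          ∑ S : Fin j → V,
              (if IsGood G α β (rnormDensity G r) h i j S then 0
                else (Nat.card (commNbhd G S) : ℝ) ^ ℓ) ≤
            β * (Fintype.card V : ℝ) ^ (j + ℓ) * rnormDensity G r ^ (j * ℓ) := by
  have hh : 1 ≤ h := hr.trans hrh
  have hh1 : (1:ℝ) ≤ (h:ℝ) := by exact_mod_cast hh
  have hh0 : (0:ℝ) < (h:ℝ) := by linarith
  set M : ℝ := ((h:ℝ) + 2) / β with hMdef
  have hM0 : 0 < M := by positivity
  have hM2 : 2 ≤ M := by
    rw [hMdef, le_div_iff₀ hβ0]; nlinarith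
  have hM1 : 1 ≤ M := by linarith
  have hMh : (h:ℝ) * β⁻¹ ≤ M := by
    rw [hMdef, div_eq_mul_inv]
    have : (0:ℝ) < β⁻¹ := by positivity
    nlinarith
  set b : ℝ := β / M ^ (3 * (h + 1)) with hbdef
  have hMpow1 : (1:ℝ) ≤ M ^ (3 * (h + 1)) := one_le_pow₀ hM1
  have hb0 : 0 < b := by positivity
  have hb1 : b ≤ 1 := by
    rw [hbdef, div_le_one (by positivity)]; linarith
  set α : ℝ := b ^ (h ^ h) with hαdef
  have hα0 : 0 < α := by positivity
  have hα1 : α ≤ 1 := pow_le_one₀ hb0.le hb1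
  set ε : ℕ → ℝ := fun i => M ^ (3 * (i:ℝ) + 3) * α ^ (((h:ℝ) ^ i)⁻¹) with hεdef
  have hεpos : ∀ i, 0 < ε i := fun i =>
    mul_pos (Real.rpow_pos_of_pos hM0 _) (Real.rpow_pos_of_pos hα0 _)
  have hhpow : ∀ i : ℕ, 0 < ((h:ℝ) ^ i) := fun i => pow_pos hh0 i
  have hexp_le1 : ∀ i : ℕ, ((h:ℝ) ^ i)⁻¹ ≤ 1 := fun i =>
    inv_le_one_of_one_le₀ (one_le_pow₀ hh1)
  have hα_mono : ∀ i : ℕ, i ≤ h → α ^ (((h:ℝ) ^ i)⁻¹) ≤ α ^ (((h:ℝ) ^ h)⁻¹) := by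
    intro i hi
    exact Real.rpow_le_rpow_of_exponent_ge hα0 hα1
      (by
        apply inv_anti₀ (hhpow i)
        exact pow_le_pow_right₀ hh1 hi)
  have hα_hh : α ^ (((h:ℝ) ^ h)⁻¹) = b := by
    rw [hαdef, ← Real.rpow_natCast b (h ^ h), ← Real.rpow_mul hb0.le]
    rw [show ((h ^ h : ℕ) : ℝ) = (h:ℝ) ^ h by push_cast; ring]
    rw [mul_inv_cancel₀ (ne_of_gt (hhpow h)), Real.rpow_one]
  have hεβ : ∀ i : ℕ, i ≤ h → ε i ≤ β := by
    intro i hi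
    have h1 : ε i ≤ M ^ (3 * (h:ℝ) + 3) * (α ^ (((h:ℝ) ^ h)⁻¹)) := by
      apply mul_le_mul
      · apply Real.rpow_le_rpow_of_exponent_le hM1
        have : (i:ℝ) ≤ (h:ℝ) := by exact_mod_cast hi
        linarith
      · exact hα_mono i hi
      · positivity
      · positivity
    rw [hα_hh, hbdef] at h1
    have h2 : M ^ (3 * (h:ℝ) + 3) = M ^ (3 * (h + 1)) := by
      rw [← Real.rpow_natCast M (3 * (h + 1))]
      congr 1; push_cast; ring
    rw [h2] at h1
    calc ε i ≤ M ^ (3 * (h + 1)) * (β / M ^ (3 * (h + 1))) := h1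
      _ = β := by field_simp
  have hε1 : ∀ i : ℕ, i ≤ h → ε i ≤ 1 := fun i hi => (hεβ i hi).trans hβ1.le
  have hαε : α ≤ ε 0 := by
    have h1 : (1:ℝ) ≤ M ^ (3 * ((0:ℕ):ℝ) + 3) := by
      rw [show (1:ℝ) = M ^ (0:ℝ) by rw [Real.rpow_zero]]
      exact Real.rpow_le_rpow_of_exponent_le hM1 (by norm_num)
    have h2 : ε 0 = M ^ (3 * ((0:ℕ):ℝ) + 3) * α := by
      rw [hεdef]
      simp
    nlinarith [h1, h2, hα0]
  have hstep : ∀ i : ℕ, i < h →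
      α + (h:ℝ) * β⁻¹ * (ε i) ^ ((h:ℝ)⁻¹) ≤ ε (i + 1) := by
    intro i hi
    have e1 : (ε i) ^ ((h:ℝ)⁻¹)
        = M ^ ((3 * (i:ℝ) + 3) * (h:ℝ)⁻¹) * α ^ (((h:ℝ) ^ (i + 1))⁻¹) := by
      rw [hεdef]
      rw [Real.mul_rpow (by positivity) (by positivity), ← Real.rpow_mul hM0.le,
        ← Real.rpow_mul hα0.le]
      congr 1
      rw [pow_succ, mul_inv]
    have e2 : M ^ ((3 * (i:ℝ) + 3) * (h:ℝ)⁻¹) ≤ M ^ (3 * (i:ℝ) + 3) := by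
      apply Real.rpow_le_rpow_of_exponent_le hM1
      have h1 : (3 * (i:ℝ) + 3) * (h:ℝ)⁻¹ ≤ (3 * (i:ℝ) + 3) * 1 := by
        apply mul_le_mul_of_nonneg_left _ (by positivity)
        exact inv_le_one_of_one_le₀ hh1
      linarith
    have hαr : 0 ≤ α ^ (((h:ℝ) ^ (i + 1))⁻¹) := (Real.rpow_pos_of_pos hα0 _).le
    have e3 : (h:ℝ) * β⁻¹ * (ε i) ^ ((h:ℝ)⁻¹)
        ≤ M * M ^ (3 * (i:ℝ) + 3) * α ^ (((h:ℝ) ^ (i + 1))⁻¹) := by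
      rw [e1, ← mul_assoc]
      apply mul_le_mul_of_nonneg_right _ hαr
      exact mul_le_mul hMh e2 (Real.rpow_pos_of_pos hM0 _).le (by positivity)
    have e4 : α ≤ α ^ (((h:ℝ) ^ (i + 1))⁻¹) := by
      nth_rewrite 1 [show α = α ^ (1:ℝ) by rw [Real.rpow_one]]
      exact Real.rpow_le_rpow_of_exponent_ge hα0 hα1 (hexp_le1 (i + 1))
    have e5 : M * M ^ (3 * (i:ℝ) + 3) = M ^ (3 * (i:ℝ) + 4) := by
      nth_rewrite 1 [show M = M ^ (1:ℝ) by rw [Real.rpow_one]]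
      rw [← Real.rpow_add hM0]; congr 1; ring
    have e6 : (1:ℝ) ≤ M ^ (3 * (i:ℝ) + 4) := by
      rw [show (1:ℝ) = M ^ (0:ℝ) by rw [Real.rpow_zero]]
      exact Real.rpow_le_rpow_of_exponent_le hM1 (by positivity)
    have e7 : 2 * M ^ (3 * (i:ℝ) + 4) ≤ M ^ (3 * ((i:ℝ) + 1) + 3) := by
      have hm : M ^ (3 * (i:ℝ) + 4) * 2 ≤ M ^ (3 * (i:ℝ) + 4) * M ^ (2:ℝ) := by
        apply mul_le_mul_of_nonneg_left _ (by positivity)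
        nth_rewrite 1 [show (2:ℝ) = 2 ^ (1:ℝ) by rw [Real.rpow_one]]
        calc (2:ℝ) ^ (1:ℝ) ≤ M ^ (1:ℝ) := by
              rw [Real.rpow_one, Real.rpow_one]; exact hM2
          _ ≤ M ^ (2:ℝ) := Real.rpow_le_rpow_of_exponent_le hM1 (by norm_num)
      rw [← Real.rpow_add hM0] at hm
      calc 2 * M ^ (3 * (i:ℝ) + 4) = M ^ (3 * (i:ℝ) + 4) * 2 := by ring
        _ ≤ M ^ (3 * (i:ℝ) + 4 + 2) := hm
        _ = M ^ (3 * ((i:ℝ) + 1) + 3) := by ring_nf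
    have target : ε (i + 1) = M ^ (3 * ((i:ℝ) + 1) + 3) * α ^ (((h:ℝ) ^ (i + 1))⁻¹) := by
      rw [hεdef]; push_cast; ring_nf
    calc α + (h:ℝ) * β⁻¹ * (ε i) ^ ((h:ℝ)⁻¹)
        ≤ α ^ (((h:ℝ) ^ (i + 1))⁻¹) + M ^ (3 * (i:ℝ) + 4) * α ^ (((h:ℝ) ^ (i + 1))⁻¹) := by
          rw [← e5] at *; exact add_le_add e4 e3
      _ = (1 + M ^ (3 * (i:ℝ) + 4)) * α ^ (((h:ℝ) ^ (i + 1))⁻¹) := by ring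
      _ ≤ (2 * M ^ (3 * (i:ℝ) + 4)) * α ^ (((h:ℝ) ^ (i + 1))⁻¹) := by
          apply mul_le_mul_of_nonneg_right _ hαr; linarith
      _ ≤ M ^ (3 * ((i:ℝ) + 1) + 3) * α ^ (((h:ℝ) ^ (i + 1))⁻¹) :=
          mul_le_mul_of_nonneg_right e7 hαr
      _ = ε (i + 1) := target.symm
  refine ⟨α, hα0, ?_⟩
  suffices H : ∀ i : ℕ, i ≤ h → ∀ (V : Type) [Fintype V] [Nonempty V] (G : SimpleGraph V)
      [DecidableRel G.Adj], ∀ j ℓ : ℕ, 1 ≤ j → j ≤ h → 1 ≤ ℓ → ℓ ≤ j →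
      ∑ S : Fin j → V, (if IsGood G α β (rnormDensity G r) h i j S then 0
          else (Nat.card (commNbhd G S) : ℝ) ^ ℓ)
        ≤ ε i * ((Fintype.card V : ℝ) ^ (j + ℓ) * rnormDensity G r ^ (j * ℓ)) by
    intro V _ _ G _ i j ℓ hih hj1 hjh hℓ1 hℓj
    refine le_trans (H i hih V G j ℓ hj1 hjh hℓ1 hℓj) ?_
    rw [mul_assoc β]
    refine mul_le_mul_of_nonneg_right (hεβ i hih)
      (mul_nonneg (by positivity) (pow_nonneg (rnormDensity_nonneg G r) _))
  intro i
  induction i with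
  | zero =>
    intro _ V _ _ G _ j ℓ hj1 hjh hℓ1 hℓj
    have hp := rnormDensity_nonneg G r
    refine le_trans (bad0_sum G hα0 hα1 hp hℓ1 _ ?_) ?_
    · intro S hbad
      exact not_le.1 hbad
    · exact mul_le_mul_of_nonneg_right hαε (by positivity)
  | succ i ih =>
    intro hih V _ _ G _ j ℓ hj1 hjh hℓ1 hℓj
    have hi_le : i ≤ h := by omega
    set p : ℝ := rnormDensity G r with hpdef
    have hp : 0 ≤ p := rnormDensity_nonneg G r
    set n : ℝ := (Fintype.card V : ℝ) with hndef
    have hn1 : (1:ℝ) ≤ n := by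
      rw [hndef]; exact_mod_cast Fintype.card_pos
    have hn0 : (0:ℝ) < n := by linarith
    have hX0 : (0:ℝ) ≤ n ^ (j + ℓ) * p ^ (j * ℓ) :=
      mul_nonneg (pow_nonneg hn0.le _) (pow_nonneg hp _)
    -- termwise decomposition
    have hdecomp : ∀ S : Fin j → V,
        (if IsGood G α β p h (i + 1) j S then 0 else (Nat.card (commNbhd G S) : ℝ) ^ ℓ)
        ≤ (if IsGood G α β p h 0 j S then 0 else (Nat.card (commNbhd G S) : ℝ) ^ ℓ)
          + ∑ k ∈ Finset.Icc j h,
              (if (1 - β) * (Nat.card (commNbhd G S) : ℝ) ^ k ≤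
                  (Nat.card {T : Fin k → V //
                    (∀ a, T a ∈ commNbhd G S) ∧ IsGood G α β p h i k T} : ℝ) then 0
                else (Nat.card (commNbhd G S) : ℝ) ^ ℓ) := by
      intro S
      have hfirst : (0:ℝ) ≤ (if IsGood G α β p h 0 j S then 0
          else (Nat.card (commNbhd G S) : ℝ) ^ ℓ) := by split <;> positivity
      have hsum0 : (0:ℝ) ≤ ∑ k ∈ Finset.Icc j h,
          (if (1 - β) * (Nat.card (commNbhd G S) : ℝ) ^ k ≤
              (Nat.card {T : Fin k → V //
                (∀ a, T a ∈ commNbhd G S) ∧ IsGood G α β p h i k T} : ℝ) then 0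
            else (Nat.card (commNbhd G S) : ℝ) ^ ℓ) :=
        Finset.sum_nonneg fun k _ => by split <;> positivity
      by_cases hg : IsGood G α β p h (i + 1) j S
      · rw [if_pos hg]; linarith
      · rw [if_neg hg]
        have hg' : ¬ ((α * p ^ j * (Fintype.card V : ℝ) ≤ (Nat.card (commNbhd G S) : ℝ)) ∧
            ∀ k : ℕ, j ≤ k → k ≤ h →
              (1 - β) * (Nat.card (commNbhd G S) : ℝ) ^ k ≤
                (Nat.card {T : Fin k → V //
                  (∀ a, T a ∈ commNbhd G S) ∧ IsGood G α β p h i k T} : ℝ)) := hg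
        rcases not_and_or.1 hg' with hg0 | hgk
        · have h0 : ¬ IsGood G α β p h 0 j S := hg0
          rw [if_neg h0]
          linarith
        · push_neg at hgk
          obtain ⟨k, hk1, hk2, hk3⟩ := hgk
          have hsingle := Finset.single_le_sum
            (f := fun k : ℕ => (if (1 - β) * (Nat.card (commNbhd G S) : ℝ) ^ k ≤
                (Nat.card {T : Fin k → V //
                  (∀ a, T a ∈ commNbhd G S) ∧ IsGood G α β p h i k T} : ℝ) then (0:ℝ)
              else (Nat.card (commNbhd G S) : ℝ) ^ ℓ))
            (fun k _ => by split <;> positivity) (Finset.mem_Icc.2 ⟨hk1, hk2⟩)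
          rw [if_neg (not_le.2 hk3)] at hsingle
          linarith
    -- per-k bound
    have hperk : ∀ k : ℕ, j ≤ k → k ≤ h →
        ∑ S : Fin j → V, (if (1 - β) * (Nat.card (commNbhd G S) : ℝ) ^ k ≤
            (Nat.card {T : Fin k → V //
              (∀ a, T a ∈ commNbhd G S) ∧ IsGood G α β p h i k T} : ℝ) then 0
          else (Nat.card (commNbhd G S) : ℝ) ^ ℓ)
        ≤ β⁻¹ * (ε i) ^ ((h:ℝ)⁻¹) * (n ^ (j + ℓ) * p ^ (j * ℓ)) := by
      intro k hjk hkh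
      have hk1 : 1 ≤ k := hj1.trans hjk
      have hk0 : (0:ℝ) < (k:ℝ) := by exact_mod_cast hk1
      set θ : ℝ := (ℓ:ℝ) / (k:ℝ) with hθdef
      have hθ0 : 0 < θ := div_pos (by exact_mod_cast hℓ1) hk0
      have hθ1 : θ ≤ 1 := (div_le_one hk0).2 (by exact_mod_cast hℓj.trans hjk)
      have hkθ : (k:ℝ) * θ = (ℓ:ℝ) := by
        rw [hθdef]; field_simp
      have hθh : (h:ℝ)⁻¹ ≤ θ := by
        have h1 : (h:ℝ)⁻¹ ≤ (k:ℝ)⁻¹ := inv_anti₀ hk0 (by exact_mod_cast hkh)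
        have h2 : (k:ℝ)⁻¹ ≤ θ := by
          rw [hθdef, inv_eq_one_div]
          gcongr
          exact_mod_cast hℓ1
        linarith
      have hn0le : (0:ℝ) ≤ n := hn0.le
      have hA : ∀ S : Fin j → V,
          (if (1 - β) * (Nat.card (commNbhd G S) : ℝ) ^ k ≤
              (Nat.card {T : Fin k → V //
                (∀ a, T a ∈ commNbhd G S) ∧ IsGood G α β p h i k T} : ℝ) then 0
            else (Nat.card (commNbhd G S) : ℝ) ^ ℓ)
          ≤ β⁻¹ * ((Nat.card {T : Fin k → V //
                (∀ a, T a ∈ commNbhd G S) ∧ ¬ IsGood G α β p h i k T} : ℝ)) ^ θ := by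
        intro S
        split
        · positivity
        · next hf =>
          set x : ℝ := (Nat.card (commNbhd G S) : ℝ) with hxdef
          set g : ℕ := Nat.card {T : Fin k → V //
                (∀ a, T a ∈ commNbhd G S) ∧ IsGood G α β p h i k T} with hgdef
          set bb : ℕ := Nat.card {T : Fin k → V //
                (∀ a, T a ∈ commNbhd G S) ∧ ¬ IsGood G α β p h i k T} with hbbdef
          have hx0 : (0:ℝ) ≤ x := Nat.cast_nonneg _
          have hsplit : g + bb = Nat.card (commNbhd G S) ^ k :=
            (card_split (fun T : Fin k → V => ∀ a, T a ∈ commNbhd G S)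
              (IsGood G α β p h i k)).trans (card_seqIn k (commNbhd G S))
          have hcast : (g:ℝ) + (bb:ℝ) = x ^ k := by
            rw [hxdef]
            exact_mod_cast congrArg (Nat.cast : ℕ → ℝ) hsplit
          have hkey : β * x ^ k ≤ (bb:ℝ) := by
            have hflt : (g:ℝ) < (1 - β) * x ^ k := not_le.1 hf
            linarith
          have h3 : x ^ k ≤ β⁻¹ * (bb:ℝ) := by
            calc x ^ k = β⁻¹ * (β * x ^ k) := by field_simp
              _ ≤ β⁻¹ * (bb:ℝ) := mul_le_mul_of_nonneg_left hkey (by positivity)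
          have h5 : (x ^ k) ^ θ = x ^ ℓ := by
            rw [← Real.rpow_natCast x k, ← Real.rpow_mul hx0, hkθ, Real.rpow_natCast]
          have h4 : (x ^ k) ^ θ ≤ (β⁻¹ * (bb:ℝ)) ^ θ :=
            Real.rpow_le_rpow (by positivity) h3 hθ0.le
          have h6 : (β⁻¹ * (bb:ℝ)) ^ θ = (β⁻¹) ^ θ * ((bb:ℝ)) ^ θ :=
            Real.mul_rpow (by positivity) (Nat.cast_nonneg _)
          have hβinv1 : (1:ℝ) ≤ β⁻¹ := by
            rw [← inv_one]
            exact inv_anti₀ hβ0 hβ1.le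
          have h7 : (β⁻¹) ^ θ ≤ β⁻¹ := by
            have h8 := Real.rpow_le_rpow_of_exponent_le hβinv1 hθ1
            rwa [Real.rpow_one] at h8
          calc x ^ ℓ = (x ^ k) ^ θ := h5.symm
            _ ≤ (β⁻¹ * (bb:ℝ)) ^ θ := h4
            _ = (β⁻¹) ^ θ * ((bb:ℝ)) ^ θ := h6
            _ ≤ β⁻¹ * ((bb:ℝ)) ^ θ :=
              mul_le_mul_of_nonneg_right h7 (Real.rpow_nonneg (Nat.cast_nonneg _) _)
      have hbsum_nonneg : (0:ℝ) ≤ ∑ S : Fin j → V,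
          (Nat.card {T : Fin k → V //
            (∀ a, T a ∈ commNbhd G S) ∧ ¬ IsGood G α β p h i k T} : ℝ) :=
        Finset.sum_nonneg fun S _ => Nat.cast_nonneg _
      have hC : ∑ S : Fin j → V, (Nat.card {T : Fin k → V //
            (∀ a, T a ∈ commNbhd G S) ∧ ¬ IsGood G α β p h i k T} : ℝ)
          = ∑ T : Fin k → V, (if IsGood G α β p h i k T then 0
              else (Nat.card (commNbhd G T) : ℝ) ^ j) := by
        rw [double_count G (fun T => ¬ IsGood G α β p h i k T)]
        exact Finset.sum_congr rfl fun T _ => by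
          by_cases hG : IsGood G α β p h i k T <;> simp [hG]
      have hIH := ih hi_le V G k j hk1 hkh hj1 hjk
      have hsum_b : ∑ S : Fin j → V, (Nat.card {T : Fin k → V //
            (∀ a, T a ∈ commNbhd G S) ∧ ¬ IsGood G α β p h i k T} : ℝ)
          ≤ ε i * (n ^ (k + j) * p ^ (k * j)) := by
        rw [hC]
        exact hIH
      have hJ := sum_rpow_le_card_mul (f := fun S : Fin j → V =>
        (Nat.card {T : Fin k → V //
          (∀ a, T a ∈ commNbhd G S) ∧ ¬ IsGood G α β p h i k T} : ℝ))
        (fun S => Nat.cast_nonneg _) hθ0 hθ1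
      have hcardfun : ((Fintype.card (Fin j → V) : ℕ) : ℝ) = n ^ j := by
        rw [Fintype.card_fun, Fintype.card_fin, hndef]
        push_cast
        ring
      rw [hcardfun] at hJ
      have en : ((n ^ j : ℝ)) ^ ((1:ℝ) - θ) * ((n ^ (k + j) : ℝ)) ^ θ = n ^ (j + ℓ) := by
        rw [← Real.rpow_natCast n j, ← Real.rpow_natCast n (k + j),
          ← Real.rpow_natCast n (j + ℓ), ← Real.rpow_mul hn0le, ← Real.rpow_mul hn0le,
          ← Real.rpow_add hn0]
        congr 1
        push_cast
        linear_combination hkθ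
      have ep : ((p ^ (k * j) : ℝ)) ^ θ = p ^ (j * ℓ) := by
        rw [← Real.rpow_natCast p (k * j), ← Real.rpow_mul hp, ← Real.rpow_natCast p (j * ℓ)]
        congr 1
        push_cast
        linear_combination (j:ℝ) * hkθ
      have hfact : (n ^ j) ^ ((1:ℝ) - θ) * (ε i * (n ^ (k + j) * p ^ (k * j))) ^ θ
          = (ε i) ^ θ * (n ^ (j + ℓ) * p ^ (j * ℓ)) := by
        calc (n ^ j) ^ ((1:ℝ) - θ) * (ε i * (n ^ (k + j) * p ^ (k * j))) ^ θ
            = (ε i) ^ θ * (((n ^ j) ^ ((1:ℝ) - θ) * (n ^ (k + j)) ^ θ) * (p ^ (k * j)) ^ θ) := by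
              rw [Real.mul_rpow (hεpos i).le (mul_nonneg (pow_nonneg hn0le _) (pow_nonneg hp _)),
                Real.mul_rpow (pow_nonneg hn0le _) (pow_nonneg hp _)]
              ring
          _ = (ε i) ^ θ * (n ^ (j + ℓ) * p ^ (j * ℓ)) := by rw [en, ep]
      calc ∑ S : Fin j → V, (if (1 - β) * (Nat.card (commNbhd G S) : ℝ) ^ k ≤
              (Nat.card {T : Fin k → V //
                (∀ a, T a ∈ commNbhd G S) ∧ IsGood G α β p h i k T} : ℝ) then 0
            else (Nat.card (commNbhd G S) : ℝ) ^ ℓ)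
          ≤ ∑ S : Fin j → V, β⁻¹ * ((Nat.card {T : Fin k → V //
              (∀ a, T a ∈ commNbhd G S) ∧ ¬ IsGood G α β p h i k T} : ℝ)) ^ θ :=
            Finset.sum_le_sum fun S _ => hA S
        _ = β⁻¹ * ∑ S : Fin j → V, ((Nat.card {T : Fin k → V //
              (∀ a, T a ∈ commNbhd G S) ∧ ¬ IsGood G α β p h i k T} : ℝ)) ^ θ := by
            rw [Finset.mul_sum]
        _ ≤ β⁻¹ * ((n ^ j) ^ ((1:ℝ) - θ) * (∑ S : Fin j → V, (Nat.card {T : Fin k → V //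
              (∀ a, T a ∈ commNbhd G S) ∧ ¬ IsGood G α β p h i k T} : ℝ)) ^ θ) :=
            mul_le_mul_of_nonneg_left hJ (inv_nonneg.2 hβ0.le)
        _ ≤ β⁻¹ * ((n ^ j) ^ ((1:ℝ) - θ) * (ε i * (n ^ (k + j) * p ^ (k * j))) ^ θ) := by
            apply mul_le_mul_of_nonneg_left _ (inv_nonneg.2 hβ0.le)
            apply mul_le_mul_of_nonneg_left _ (Real.rpow_nonneg (pow_nonneg hn0le _) _)
            exact Real.rpow_le_rpow hbsum_nonneg hsum_b hθ0.le
        _ = β⁻¹ * ((ε i) ^ θ * (n ^ (j + ℓ) * p ^ (j * ℓ))) := by rw [hfact]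
        _ ≤ β⁻¹ * ((ε i) ^ ((h:ℝ)⁻¹) * (n ^ (j + ℓ) * p ^ (j * ℓ))) := by
            apply mul_le_mul_of_nonneg_left _ (inv_nonneg.2 hβ0.le)
            apply mul_le_mul_of_nonneg_right _ hX0
            exact Real.rpow_le_rpow_of_exponent_ge (hεpos i) (hε1 i hi_le) hθh
        _ = β⁻¹ * (ε i) ^ ((h:ℝ)⁻¹) * (n ^ (j + ℓ) * p ^ (j * ℓ)) := by ring
    -- final assembly
    have hnonneg_term : (0:ℝ) ≤ β⁻¹ * (ε i) ^ ((h:ℝ)⁻¹) * (n ^ (j + ℓ) * p ^ (j * ℓ)) :=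
      mul_nonneg (mul_nonneg (inv_nonneg.2 hβ0.le) (Real.rpow_nonneg (hεpos i).le _)) hX0
    calc ∑ S : Fin j → V, (if IsGood G α β p h (i + 1) j S then 0
            else (Nat.card (commNbhd G S) : ℝ) ^ ℓ)
        ≤ ∑ S : Fin j → V, ((if IsGood G α β p h 0 j S then 0
              else (Nat.card (commNbhd G S) : ℝ) ^ ℓ)
            + ∑ k ∈ Finset.Icc j h,
                (if (1 - β) * (Nat.card (commNbhd G S) : ℝ) ^ k ≤
                    (Nat.card {T : Fin k → V //
                      (∀ a, T a ∈ commNbhd G S) ∧ IsGood G α β p h i k T} : ℝ) then 0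
                  else (Nat.card (commNbhd G S) : ℝ) ^ ℓ)) :=
          Finset.sum_le_sum fun S _ => hdecomp S
      _ = (∑ S : Fin j → V, (if IsGood G α β p h 0 j S then 0
              else (Nat.card (commNbhd G S) : ℝ) ^ ℓ))
            + ∑ k ∈ Finset.Icc j h, ∑ S : Fin j → V,
                (if (1 - β) * (Nat.card (commNbhd G S) : ℝ) ^ k ≤
                    (Nat.card {T : Fin k → V //
                      (∀ a, T a ∈ commNbhd G S) ∧ IsGood G α β p h i k T} : ℝ) then 0
                  else (Nat.card (commNbhd G S) : ℝ) ^ ℓ) := by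
          rw [Finset.sum_add_distrib, Finset.sum_comm]
      _ ≤ α * (n ^ (j + ℓ) * p ^ (j * ℓ))
            + ∑ _k ∈ Finset.Icc j h,
                (β⁻¹ * (ε i) ^ ((h:ℝ)⁻¹) * (n ^ (j + ℓ) * p ^ (j * ℓ))) := by
          apply add_le_add
          · exact bad0_sum G hα0 hα1 hp hℓ1 _ (fun S hbad => not_le.1 hbad)
          · exact Finset.sum_le_sum fun k hk =>
              hperk k (Finset.mem_Icc.1 hk).1 (Finset.mem_Icc.1 hk).2
      _ = α * (n ^ (j + ℓ) * p ^ (j * ℓ))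
            + ((h + 1 - j : ℕ) : ℝ) * (β⁻¹ * (ε i) ^ ((h:ℝ)⁻¹) * (n ^ (j + ℓ) * p ^ (j * ℓ))) := by
          rw [Finset.sum_const, Nat.card_Icc, nsmul_eq_mul]
      _ ≤ α * (n ^ (j + ℓ) * p ^ (j * ℓ))
            + (h:ℝ) * (β⁻¹ * (ε i) ^ ((h:ℝ)⁻¹) * (n ^ (j + ℓ) * p ^ (j * ℓ))) := by
          apply add_le_add (le_refl _)
          apply mul_le_mul_of_nonneg_right _ hnonneg_term
          exact_mod_cast Nat.cast_le.2 (by omega : h + 1 - j ≤ h)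
      _ = (α + (h:ℝ) * β⁻¹ * (ε i) ^ ((h:ℝ)⁻¹)) * (n ^ (j + ℓ) * p ^ (j * ℓ)) := by ring
      _ ≤ ε (i + 1) * (n ^ (j + ℓ) * p ^ (j * ℓ)) :=
          mul_le_mul_of_nonneg_right (hstep i (by omega)) hX0
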